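/- arXiv:1812.06704 — 3 statements merged into one kernel-verified Lean document; each statement's English description precedes it below -/
import Mathlib

section
/- Every bounded continuous complex function on X with uniform radial limits at infinity is uniformly continuous on X; in particular, for any family S of linear subspaces of X, the algebra E_S(X) is contained in the C*-algebra of bounded uniformly continuous functions on X. -/
open MeasureTheory Metric Filter Topology

noncomputable section

/-- `X d` is the Euclidean space `ℝ^d` with its standard inner product and norm. -/
abbrev X (d : ℕ) : Type := EuclideanSpace ℝ (Fin d)

/-- `h` is a boundary function for `f` : `f` has uniform radial limits at infinity given
(on the unit sphere) by the continuous function `h`. -/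
def IsBoundary {E : Type*} [NormedAddCommGroup E] [InnerProductSpace ℝ E]
    (f : E → ℂ) (h : E → ℂ) : Prop :=
  Continuous h ∧
    ∀ ε > 0, ∃ r > 0, ∀ z : E, r ≤ ‖z‖ → ‖f z - h (‖z‖⁻¹ • z)‖ < ε

/-- `f` has uniform radial limits at infinity. -/
def HasUniformRadialLimits {E : Type*} [NormedAddCommGroup E] [InnerProductSpace ℝ E]
    (f : E → ℂ) : Prop :=
  ∃ h : E → ℂ, IsBoundary f h

/-- The generating set of the algebra `E_S(X)` : functions of the form `g ∘ π_Y` with `Y ∈ S`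
and `g` a bounded continuous function on `Y^⊥` having uniform radial limits at infinity. -/
def projGen {E : Type*} [NormedAddCommGroup E] [InnerProductSpace ℝ E]
    [FiniteDimensional ℝ E] (S : Set (Submodule ℝ E)) :
    Set (BoundedContinuousFunction E ℂ) :=
  { f | ∃ Y ∈ S, ∃ g : BoundedContinuousFunction (↥Yᗮ) ℂ,
      HasUniformRadialLimits ⇑g ∧ ∀ x : E, f x = g (Submodule.orthogonalProjectionOnto Yᗮ x) }

/-- `E_S(X)` : the smallest closed unital *-subalgebra of `C_b(X)` containing all `g ∘ π_Y`
with `Y ∈ S` and `g` having uniform radial limits at infinity. -/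
def ES {E : Type*} [NormedAddCommGroup E] [InnerProductSpace ℝ E]
    [FiniteDimensional ℝ E] (S : Set (Submodule ℝ E)) :
    StarSubalgebra ℂ (BoundedContinuousFunction E ℂ) :=
  (StarAlgebra.adjoin ℂ (projGen S)).topologicalClosure

/-- Projection to the unit sphere is Lipschitz away from the origin. -/
lemma sphere_proj_estimate {E : Type*} [NormedAddCommGroup E] [NormedSpace ℝ E]
    {r : ℝ} (hr : 0 < r) {x y : E} (hx : r ≤ ‖x‖) (hy : r ≤ ‖y‖) :
    ‖‖x‖⁻¹ • x - ‖y‖⁻¹ • y‖ ≤ 2 / r * ‖x - y‖ := by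
  have hx0 : (0:ℝ) < ‖x‖ := lt_of_lt_of_le hr hx
  have hy0 : (0:ℝ) < ‖y‖ := lt_of_lt_of_le hr hy
  have key : ‖x‖⁻¹ • x - ‖y‖⁻¹ • y
      = ‖x‖⁻¹ • (x - y) + (‖x‖⁻¹ - ‖y‖⁻¹) • y := by
    rw [smul_sub, sub_smul]; abel
  rw [key]
  have h1 : ‖‖x‖⁻¹ • (x - y)‖ ≤ ‖x - y‖ / r := by
    rw [norm_smul, norm_inv, norm_norm]
    rw [div_eq_inv_mul]
    apply mul_le_mul_of_nonneg_right _ (norm_nonneg _)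
    exact inv_anti₀ hr hx
  have h2 : ‖(‖x‖⁻¹ - ‖y‖⁻¹) • y‖ ≤ ‖x - y‖ / r := by
    rw [norm_smul, Real.norm_eq_abs]
    have : |‖x‖⁻¹ - ‖y‖⁻¹| = |‖y‖ - ‖x‖| / (‖x‖ * ‖y‖) := by
      rw [← abs_of_pos (mul_pos hx0 hy0), ← abs_div]
      congr 1
      field_simp
    rw [this]
    have hxy : |‖y‖ - ‖x‖| ≤ ‖x - y‖ := by
      rw [abs_sub_comm]
      exact abs_norm_sub_norm_le x y
    calc |‖y‖ - ‖x‖| / (‖x‖ * ‖y‖) * ‖y‖ = |‖y‖ - ‖x‖| / ‖x‖ := by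
          field_simp
      _ ≤ ‖x - y‖ / r := by
          apply div_le_div₀ (norm_nonneg _) hxy hr hx
  calc ‖‖x‖⁻¹ • (x - y) + (‖x‖⁻¹ - ‖y‖⁻¹) • y‖
      ≤ ‖‖x‖⁻¹ • (x - y)‖ + ‖(‖x‖⁻¹ - ‖y‖⁻¹) • y‖ := norm_add_le _ _
    _ ≤ ‖x - y‖ / r + ‖x - y‖ / r := add_le_add h1 h2
    _ = 2 / r * ‖x - y‖ := by ring

/-- A bounded continuous function with uniform radial limits is uniformly continuous. -/
lemma uniformContinuous_of_isBoundary {E : Type*} [NormedAddCommGroup E]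
    [InnerProductSpace ℝ E] [FiniteDimensional ℝ E]
    (f : BoundedContinuousFunction E ℂ) {h : E → ℂ} (hb : IsBoundary ⇑f h) :
    UniformContinuous ⇑f := by
  rw [Metric.uniformContinuous_iff]
  intro ε hε
  obtain ⟨r, hr, hrad⟩ := hb.2 (ε / 4) (by positivity)
  -- uniform continuity on the closed ball of radius r + 1
  have hc1 : UniformContinuousOn ⇑f (closedBall (0:E) (r + 1)) :=
    (isCompact_closedBall 0 (r + 1)).uniformContinuousOn_of_continuous
      f.continuous.continuousOn
  have hc2 : UniformContinuousOn h (closedBall (0:E) 1) :=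
    (isCompact_closedBall 0 1).uniformContinuousOn_of_continuous hb.1.continuousOn
  rw [Metric.uniformContinuousOn_iff] at hc1 hc2
  obtain ⟨δ₁, hδ₁, H1⟩ := hc1 ε hε
  obtain ⟨δ₂, hδ₂, H2⟩ := hc2 (ε / 2) (by positivity)
  refine ⟨min δ₁ (min 1 (r * δ₂ / 2)), by positivity, ?_⟩
  intro x y hxy
  have hd1 : dist x y < δ₁ := lt_of_lt_of_le hxy (min_le_left _ _)
  have hd2 : dist x y < 1 := lt_of_lt_of_le hxy ((min_le_right _ _).trans (min_le_left _ _))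
  have hd3 : dist x y < r * δ₂ / 2 :=
    lt_of_lt_of_le hxy ((min_le_right _ _).trans (min_le_right _ _))
  rcases lt_or_ge ‖x‖ r with hxr | hxr
  · -- x in the ball, so both in closed ball r+1
    have hxb : x ∈ closedBall (0:E) (r + 1) := by
      rw [mem_closedBall, dist_zero_right]; linarith
    have hyb : y ∈ closedBall (0:E) (r + 1) := by
      rw [mem_closedBall, dist_zero_right]
      have : ‖y‖ ≤ ‖x‖ + dist x y := by
        rw [dist_eq_norm]
        calc ‖y‖ = ‖x - (x - y)‖ := by rw [sub_sub_cancel]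
          _ ≤ ‖x‖ + ‖x - y‖ := norm_sub_le _ _
      linarith
    exact H1 x hxb y hyb hd1
  · rcases lt_or_ge ‖y‖ r with hyr | hyr
    · have hyb : y ∈ closedBall (0:E) (r + 1) := by
        rw [mem_closedBall, dist_zero_right]; linarith
      have hxb : x ∈ closedBall (0:E) (r + 1) := by
        rw [mem_closedBall, dist_zero_right]
        have h1 : ‖x‖ ≤ ‖y‖ + ‖y - x‖ := by
          calc ‖x‖ = ‖y - (y - x)‖ := by rw [sub_sub_cancel]
            _ ≤ ‖y‖ + ‖y - x‖ := norm_sub_le _ _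
        have hd : ‖y - x‖ < 1 := by
          rw [← dist_eq_norm, dist_comm]; exact hd2
        linarith
      exact H1 x hxb y hyb hd1
    · -- both far
      set u := ‖x‖⁻¹ • x with hu
      set v := ‖y‖⁻¹ • y with hv
      have hx0 : (0:ℝ) < ‖x‖ := lt_of_lt_of_le hr hxr
      have hy0 : (0:ℝ) < ‖y‖ := lt_of_lt_of_le hr hyr
      have hub : u ∈ closedBall (0:E) 1 := by
        rw [mem_closedBall, dist_zero_right, hu, norm_smul, norm_inv, norm_norm,
          inv_mul_cancel₀ hx0.ne']
      have hvb : v ∈ closedBall (0:E) 1 := by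
        rw [mem_closedBall, dist_zero_right, hv, norm_smul, norm_inv, norm_norm,
          inv_mul_cancel₀ hy0.ne']
      have huv : dist u v < δ₂ := by
        rw [dist_eq_norm]
        calc ‖u - v‖ ≤ 2 / r * ‖x - y‖ := sphere_proj_estimate hr hxr hyr
          _ < 2 / r * (r * δ₂ / 2) := by
              apply mul_lt_mul_of_pos_left _ (by positivity)
              rw [← dist_eq_norm]; exact hd3
          _ = δ₂ := by field_simp
      have e1 : dist (f x) (h u) < ε / 4 := by
        rw [Complex.dist_eq]; exact hrad x hxr
      have e2 : dist (h v) (f y) < ε / 4 := by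
        rw [dist_comm, Complex.dist_eq]; exact hrad y hyr
      have e3 : dist (h u) (h v) < ε / 2 := H2 u hub v hvb huv
      calc dist (f x) (f y) ≤ dist (f x) (h u) + dist (h u) (h v) + dist (h v) (f y) :=
            dist_triangle4 _ _ _ _
        _ < ε / 4 + ε / 2 + ε / 4 := by linarith
        _ = ε := by ring

/-- Products of bounded uniformly continuous functions are uniformly continuous. -/
lemma uc_mul {α : Type*} [PseudoMetricSpace α]
    (f g : BoundedContinuousFunction α ℂ) (hf : UniformContinuous ⇑f)
    (hg : UniformContinuous ⇑g) : UniformContinuous ⇑(f * g) := by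
  rw [Metric.uniformContinuous_iff] at hf hg ⊢
  intro ε hε
  set C : ℝ := ‖f‖ + ‖g‖ + 1 with hC
  have hC0 : (0:ℝ) < C := by positivity
  obtain ⟨δ₁, hδ₁, H1⟩ := hf (ε / (2 * C)) (by positivity)
  obtain ⟨δ₂, hδ₂, H2⟩ := hg (ε / (2 * C)) (by positivity)
  refine ⟨min δ₁ δ₂, lt_min hδ₁ hδ₂, fun {x y} hxy => ?_⟩
  have h1 : dist (f x) (f y) < ε / (2 * C) :=
    H1 (lt_of_lt_of_le hxy (min_le_left _ _))
  have h2 : dist (g x) (g y) < ε / (2 * C) :=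
    H2 (lt_of_lt_of_le hxy (min_le_right _ _))
  have key : (f * g) x - (f * g) y = f x * (g x - g y) + (f x - f y) * g y := by
    simp [BoundedContinuousFunction.coe_mul]; ring
  rw [Complex.dist_eq, key]
  have hfx : ‖f x‖ ≤ C := le_trans (f.norm_coe_le_norm x) (by rw [hC]; have := norm_nonneg g; linarith)
  have hgy : ‖g y‖ ≤ C := le_trans (g.norm_coe_le_norm y) (by rw [hC]; have := norm_nonneg f; linarith)
  rw [Complex.dist_eq] at h1 h2
  calc ‖f x * (g x - g y) + (f x - f y) * g y‖
      ≤ ‖f x * (g x - g y)‖ + ‖(f x - f y) * g y‖ := norm_add_le _ _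
    _ = ‖f x‖ * ‖g x - g y‖ + ‖f x - f y‖ * ‖g y‖ := by rw [norm_mul, norm_mul]
    _ ≤ C * ‖g x - g y‖ + ‖f x - f y‖ * C := by
        gcongr
    _ < C * (ε / (2 * C)) + (ε / (2 * C)) * C := by
        gcongr
    _ = ε := by field_simp; ring

/-- Uniform limits of uniformly continuous bounded functions are uniformly continuous. -/
lemma uc_isClosed {α : Type*} [PseudoMetricSpace α] :
    IsClosed {f : BoundedContinuousFunction α ℂ | UniformContinuous ⇑f} := by
  apply isClosed_of_closure_subset
  intro f hf
  rw [Metric.mem_closure_iff] at hf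
  rw [Set.mem_setOf_eq, Metric.uniformContinuous_iff]
  intro ε hε
  obtain ⟨g, hg, hfg⟩ := hf (ε / 3) (by positivity)
  rw [Set.mem_setOf_eq, Metric.uniformContinuous_iff] at hg
  obtain ⟨δ, hδ, H⟩ := hg (ε / 3) (by positivity)
  refine ⟨δ, hδ, fun {x y} hxy => ?_⟩
  have e1 : dist (f x) (g x) ≤ dist f g := BoundedContinuousFunction.dist_coe_le_dist x
  have e2 : dist (g y) (f y) ≤ dist f g := by
    rw [dist_comm]; exact BoundedContinuousFunction.dist_coe_le_dist y
  have e3 : dist (g x) (g y) < ε / 3 := H hxy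
  calc dist (f x) (f y) ≤ dist (f x) (g x) + dist (g x) (g y) + dist (g y) (f y) :=
        dist_triangle4 _ _ _ _
    _ < ε / 3 + ε / 3 + ε / 3 := by
        have := lt_of_le_of_lt e1 hfg
        have := lt_of_le_of_lt e2 hfg
        linarith
    _ = ε := by ring

/-- The closed star subalgebra of uniformly continuous bounded functions. -/
def ucAlg (α : Type*) [PseudoMetricSpace α] :
    StarSubalgebra ℂ (BoundedContinuousFunction α ℂ) where
  carrier := {f | UniformContinuous ⇑f}
  mul_mem' := fun hf hg => uc_mul _ _ hf hg
  one_mem' := by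
    show UniformContinuous ⇑(1 : BoundedContinuousFunction α ℂ)
    rw [BoundedContinuousFunction.coe_one]
    exact uniformContinuous_const
  add_mem' := fun {f g} hf hg => by
    show UniformContinuous ⇑(f + g)
    rw [BoundedContinuousFunction.coe_add]
    exact hf.add hg
  zero_mem' := by
    show UniformContinuous ⇑(0 : BoundedContinuousFunction α ℂ)
    rw [BoundedContinuousFunction.coe_zero]
    exact uniformContinuous_const
  algebraMap_mem' := fun c => by
    show UniformContinuous ⇑(algebraMap ℂ (BoundedContinuousFunction α ℂ) c)
    have : ⇑(algebraMap ℂ (BoundedContinuousFunction α ℂ) c) = fun _ => c := by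
      ext x
      simp [Algebra.algebraMap_eq_smul_one]
    rw [this]
    exact uniformContinuous_const
  star_mem' := fun {f} hf => by
    show UniformContinuous ⇑(star f)
    rw [BoundedContinuousFunction.coe_star]
    exact Complex.isometry_conj.uniformContinuous.comp hf

/-- Every bounded continuous complex function on `X` with uniform radial limits at infinity
is uniformly continuous; in particular, for any family `S` of linear subspaces of `X`, the
algebra `E_S(X)` is contained in the C*-algebra of bounded uniformly continuous functions. -/
theorem uniformRadialLimits_uniformContinuous (d : ℕ) (hd : 1 ≤ d) :
    (∀ f : BoundedContinuousFunction (X d) ℂ, HasUniformRadialLimits ⇑f →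
      UniformContinuous ⇑f) ∧
    ∀ S : Set (Submodule ℝ (X d)), ∀ f ∈ ES S, UniformContinuous ⇑f := by
  constructor
  · rintro f ⟨h, hb⟩
    exact uniformContinuous_of_isBoundary f hb
  · intro S f hf
    have hle : ES S ≤ ucAlg (X d) := by
      apply StarSubalgebra.topologicalClosure_minimal
      · apply StarAlgebra.adjoin_le
        rintro f ⟨Y, hY, g, ⟨h, hb⟩, hfg⟩
        show UniformContinuous ⇑f
        have : ⇑f = ⇑g ∘ fun x => (Submodule.orthogonalProjectionOnto Yᗮ x : ↥Yᗮ) := funext hfg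
        rw [this]
        exact (uniformContinuous_of_isBoundary g hb).comp
          (Submodule.orthogonalProjectionOnto Yᗮ).uniformContinuous
      · exact uc_isClosed
    exact hle hf
end
end

section
/- Let Y ⊆ X be a linear subspace, let g be a bounded continuous function on Y^⊥ with uniform radial limits at infinity, with boundary function h on the unit sphere of Y^⊥, and set f = g ∘ π_Y ∈ C_b(X). Let a ∈ X, a ≠ 0. Then: (1) if a ∈ Y, then f(x + ra) = f(x) for all x ∈ X and all r > 0; (2) if a ∉ Y, so that p := π_Y(a) ≠ 0, then for every compact subset C ⊆ X, sup_{x ∈ C} |f(x + ra) − h(p/‖p‖)| → 0 as r → +∞; that is, the translates of f converge, uniformly on compact sets, to the constant function h(p/‖p‖). -/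
open MeasureTheory Metric Filter Topology

noncomputable section

lemma normalize_sub_le {E : Type*} [NormedAddCommGroup E] [NormedSpace ℝ E]
    {z y : E} (hz : z ≠ 0) (hy : y ≠ 0) :
    ‖‖z‖⁻¹ • z - ‖y‖⁻¹ • y‖ ≤ 2 * ‖z - y‖ / ‖z‖ := by
  have hz' : (0:ℝ) < ‖z‖ := norm_pos_iff.2 hz
  have hy' : (0:ℝ) < ‖y‖ := norm_pos_iff.2 hy
  have key : ‖z‖⁻¹ • z - ‖y‖⁻¹ • y = ‖z‖⁻¹ • (z - y) + (‖z‖⁻¹ - ‖y‖⁻¹) • y := by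
    rw [smul_sub, sub_smul]; abel
  rw [key]
  have h1 : ‖‖z‖⁻¹ • (z - y)‖ = ‖z - y‖ / ‖z‖ := by
    rw [norm_smul, norm_inv, norm_norm]; ring
  have h2 : ‖(‖z‖⁻¹ - ‖y‖⁻¹) • y‖ ≤ ‖z - y‖ / ‖z‖ := by
    rw [norm_smul, Real.norm_eq_abs]
    have : ‖z‖⁻¹ - ‖y‖⁻¹ = (‖y‖ - ‖z‖) / (‖z‖ * ‖y‖) := by
      field_simp
    have hle : |‖y‖ - ‖z‖| ≤ ‖z - y‖ := by
      rw [← norm_neg (z - y)]; simpa using abs_norm_sub_norm_le y z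
    have heq : |(‖y‖ - ‖z‖) / (‖z‖ * ‖y‖)| * ‖y‖ = |‖y‖ - ‖z‖| / ‖z‖ := by
      rw [abs_div, abs_of_pos (by positivity : (0:ℝ) < ‖z‖ * ‖y‖)]
      field_simp
    rw [this, heq]
    gcongr
  calc ‖‖z‖⁻¹ • (z - y) + (‖z‖⁻¹ - ‖y‖⁻¹) • y‖
      ≤ ‖‖z‖⁻¹ • (z - y)‖ + ‖(‖z‖⁻¹ - ‖y‖⁻¹) • y‖ := norm_add_le _ _
    _ ≤ ‖z - y‖ / ‖z‖ + ‖z - y‖ / ‖z‖ := by rw [h1]; gcongr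
    _ = 2 * ‖z - y‖ / ‖z‖ := by ring


set_option maxHeartbeats 1000000 in
/-- Let `Y ⊆ X` be a linear subspace, `g` bounded continuous on `Y^⊥` with uniform radial
limits at infinity given by the boundary function `h`, and `f = g ∘ π_Y`. Let `a ≠ 0`.
(1) If `a ∈ Y` then `f(x + ra) = f(x)` for all `x` and all `r > 0`.
(2) If `a ∉ Y` then `p := π_Y(a) ≠ 0`, and the translates `x ↦ f(x + ra)` converge, uniformly
on compact subsets of `X` as `r → +∞`, to the constant `h(p/‖p‖)`. -/
theorem translates_of_projected_function (d : ℕ) (hd : 1 ≤ d) (Y : Submodule ℝ (X d))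
    (g : BoundedContinuousFunction (↥Yᗮ) ℂ) (h : ↥Yᗮ → ℂ) (hgh : IsBoundary ⇑g h)
    (a : X d) (ha : a ≠ 0) :
    (a ∈ Y → ∀ (x : X d) (r : ℝ), 0 < r →
      g (Submodule.orthogonalProjectionOnto Yᗮ (x + r • a)) = g (Submodule.orthogonalProjectionOnto Yᗮ x)) ∧
    (a ∉ Y → Submodule.orthogonalProjectionOnto Yᗮ a ≠ 0 ∧
      ∀ C : Set (X d), IsCompact C → ∀ ε > (0 : ℝ), ∃ r₀ : ℝ, ∀ r ≥ r₀, ∀ x ∈ C,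
        ‖g (Submodule.orthogonalProjectionOnto Yᗮ (x + r • a)) -
          h (‖(Submodule.orthogonalProjectionOnto Yᗮ a : ↥Yᗮ)‖⁻¹ • Submodule.orthogonalProjectionOnto Yᗮ a)‖ < ε) := by
  
  have hmem : ∀ v : X d, Submodule.orthogonalProjectionOnto Yᗮ v = 0 ↔ v ∈ Y := by
    intro v
    rw [Submodule.orthogonalProjectionOnto_eq_zero_iff, Submodule.orthogonal_orthogonal]
  have hproj : ∀ (x : X d) (r : ℝ),
      Submodule.orthogonalProjectionOnto Yᗮ (x + r • a)
        = Submodule.orthogonalProjectionOnto Yᗮ x + r • Submodule.orthogonalProjectionOnto Yᗮ a := by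
    intro x r
    rw [map_add, (Submodule.orthogonalProjectionOnto Yᗮ).map_smul]
  have hnormle : ∀ v : X d, ‖(Submodule.orthogonalProjectionOnto Yᗮ v : ↥Yᗮ)‖ ≤ ‖v‖ := by
    intro v
    calc ‖(Submodule.orthogonalProjectionOnto Yᗮ v : ↥Yᗮ)‖
        ≤ ‖Submodule.orthogonalProjectionOnto Yᗮ‖ * ‖v‖ := (Submodule.orthogonalProjectionOnto Yᗮ).le_opNorm v
      _ ≤ 1 * ‖v‖ := mul_le_mul_of_nonneg_right (Submodule.orthogonalProjectionOnto_norm_le _) (norm_nonneg v)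
      _ = ‖v‖ := one_mul _
  constructor
  · intro haY x r _
    rw [hproj, (hmem a).2 haY, smul_zero, add_zero]
  · intro haY
    have hp : Submodule.orthogonalProjectionOnto Yᗮ a ≠ 0 := fun h0 => haY ((hmem a).1 h0)
    refine ⟨hp, ?_⟩
    set p : ↥Yᗮ := Submodule.orthogonalProjectionOnto Yᗮ a with hpdef
    clear_value p
    have hpnorm : (0:ℝ) < ‖p‖ := norm_pos_iff.2 hp
    intro C hC ε hε
    obtain ⟨M, hM⟩ := hC.isBounded.exists_norm_le
    set M' : ℝ := max M 0 + 1 with hM'def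
    clear_value M'
    have hM'pos : (0:ℝ) < M' := by rw [hM'def]; positivity
    have hMC : ∀ x ∈ C, ‖(Submodule.orthogonalProjectionOnto Yᗮ x : ↥Yᗮ)‖ ≤ M' := by
      intro x hx
      calc ‖(Submodule.orthogonalProjectionOnto Yᗮ x : ↥Yᗮ)‖ ≤ ‖x‖ := hnormle x
        _ ≤ M := hM x hx
        _ ≤ M' := by rw [hM'def]; nlinarith [le_max_left M 0]
    set u₀ : ↥Yᗮ := ‖p‖⁻¹ • p with hu₀
    clear_value u₀
    obtain ⟨δ, hδpos, hδ⟩ := Metric.continuousAt_iff.1 (hgh.1.continuousAt (x := u₀)) (ε/2) (by linarith)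
    obtain ⟨R, hRpos, hR⟩ := hgh.2 (ε/2) (by linarith)
    refine ⟨(R + M' + 2 * M' / δ) / ‖p‖, fun r hr x hx => ?_⟩
    have hrp : R + M' + 2 * M' / δ ≤ r * ‖p‖ := by
      have hr' : (R + M' + 2 * M' / δ) / ‖p‖ ≤ r := hr
      rw [div_le_iff₀ hpnorm] at hr'; linarith
    have hr0 : 0 < r := by
      have h1 : 0 < r * ‖p‖ := lt_of_lt_of_le (by positivity) hrp
      nlinarith
    set q : ↥Yᗮ := Submodule.orthogonalProjectionOnto Yᗮ x with hq
    clear_value q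
    have hqM : ‖q‖ ≤ M' := by rw [hq]; exact hMC x hx
    set z : ↥Yᗮ := q + r • p with hzdef
    clear_value z
    have hznorm : r * ‖p‖ - M' ≤ ‖z‖ := by
      have h1 : ‖r • p‖ ≤ ‖q + r • p‖ + ‖q‖ := by
        have := norm_sub_le (q + r • p) q
        simpa using this
      rw [norm_smul, Real.norm_eq_abs, abs_of_pos hr0, ← hzdef] at h1
      linarith
    have hzbig : R ≤ ‖z‖ := by
      have : 0 ≤ 2 * M' / δ := by positivity
      linarith
    have hzpos : (0:ℝ) < ‖z‖ := lt_of_lt_of_le hRpos hzbig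
    have hzne : z ≠ 0 := norm_pos_iff.1 hzpos
    have hrpne : r • p ≠ 0 := smul_ne_zero (ne_of_gt hr0) hp
    have hrpnorm : ‖r • p‖⁻¹ • (r • p) = u₀ := by
      have hs : (|r| * ‖p‖)⁻¹ * r = ‖p‖⁻¹ := by
        rw [abs_of_pos hr0, mul_inv, mul_comm r⁻¹, mul_assoc, inv_mul_cancel₀ hr0.ne', mul_one]
      rw [hu₀, norm_smul, Real.norm_eq_abs, smul_smul, hs]
    have hdir : ‖‖z‖⁻¹ • z - u₀‖ < δ := by
      have hle := normalize_sub_le hzne hrpne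
      rw [hrpnorm] at hle
      have hzsub : z - r • p = q := by rw [hzdef]; abel
      rw [hzsub] at hle
      have h2 : 2 * ‖q‖ / ‖z‖ < δ := by
        rw [div_lt_iff₀ hzpos]
        have ht : 2 * M' / δ < ‖z‖ := by linarith
        rw [div_lt_iff₀ hδpos] at ht
        have hmc : ‖z‖ * δ = δ * ‖z‖ := mul_comm _ _
        linarith
      linarith
    have hgz : ‖g z - h (‖z‖⁻¹ • z)‖ < ε/2 := hR z hzbig
    have hhz : ‖h (‖z‖⁻¹ • z) - h u₀‖ < ε/2 := by
      have := hδ (x := ‖z‖⁻¹ • z) (by simpa [dist_eq_norm] using hdir)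
      simpa [dist_eq_norm] using this
    have hzeq : Submodule.orthogonalProjectionOnto Yᗮ (x + r • a) = z := by
      rw [hproj, ← hq]; exact hzdef.symm
    rw [hzeq]
    calc ‖g z - h u₀‖ = ‖(g z - h (‖z‖⁻¹ • z)) + (h (‖z‖⁻¹ • z) - h u₀)‖ := by ring_nf
      _ ≤ ‖g z - h (‖z‖⁻¹ • z)‖ + ‖h (‖z‖⁻¹ • z) - h u₀‖ := norm_add_le _ _
      _ < ε/2 + ε/2 := add_lt_add hgz hhz
      _ = ε := by ring
end
end

section
/- Let S be a family of linear subspaces of X with {0} ∈ S, let a ∈ X, a ≠ 0, and let τ_a : E_S(X) → E_S(X) be the homomorphism sending f to the limit of the translates f(· + ra), uniformly on compact sets, as r → +∞. Let χ be a character of E_S(X) (a nonzero continuous unital *-homomorphism to ℂ). Then the following are equivalent: (a) χ vanishes on ker τ_a (equivalently χ ∘ τ_a = χ); (b) χ(f) = h_f(a/‖a‖) for every f ∈ C(X̄), where h_f is the boundary function of f; (c) for every Y ∈ S with a ∉ Y and every g ∈ C(overline{Y^⊥}) with boundary function h_g, one has χ(g ∘ π_Y) = h_g(π_Y(a)/‖π_Y(a)‖).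 -/
open MeasureTheory Metric Filter Topology

noncomputable section

/-- The translates `x ↦ f(x + ra)` converge to `g` uniformly on compact subsets of `X`
as `r → +∞`. -/
def TranslatesTendTo {d : ℕ} (a : X d) (f g : BoundedContinuousFunction (X d) ℂ) : Prop :=
  ∀ C : Set (X d), IsCompact C →
    TendstoUniformlyOn (fun (r : ℝ) (x : X d) => f (x + r • a)) (fun x => g x) atTop C

lemma norm_translate_tendsto {E : Type*} [NormedAddCommGroup E] [NormedSpace ℝ E]
    (w b : E) (hb : b ≠ 0) :
    Tendsto (fun r : ℝ => ‖w + r • b‖) atTop atTop := by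
  have hb' : 0 < ‖b‖ := norm_pos_iff.2 hb
  apply tendsto_atTop_mono' _ _ (tendsto_atTop_add_const_right atTop (-‖w‖)
    ((tendsto_atTop_atTop_of_monotone (fun x y hxy => by nlinarith) (fun c => ⟨(c+1)/‖b‖, by
      field_simp; linarith⟩) : Tendsto (fun r : ℝ => r * ‖b‖) atTop atTop)))
  filter_upwards [eventually_ge_atTop (0:ℝ)] with r hr
  have : ‖r • b‖ - ‖w‖ ≤ ‖w + r • b‖ := by
    have h := norm_sub_norm_le (r • b) (w + r • b)
    have h2 : ‖r • b - (w + r • b)‖ = ‖w‖ := by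
      rw [show r • b - (w + r • b) = -w by abel, norm_neg]
    linarith
  rw [norm_smul, Real.norm_eq_abs, abs_of_nonneg hr] at this
  simpa using this

lemma tendsto_unit_translate {E : Type*} [NormedAddCommGroup E] [NormedSpace ℝ E]
    (w b : E) (hb : b ≠ 0) :
    Tendsto (fun r : ℝ => ‖w + r • b‖⁻¹ • (w + r • b)) atTop (𝓝 (‖b‖⁻¹ • b)) := by
  have h1 : Tendsto (fun r : ℝ => r⁻¹ • w + b) atTop (𝓝 b) := by
    have := (tendsto_inv_atTop_zero (𝕜 := ℝ)).smul_const w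
    simpa using this.add_const b
  have hcont : ContinuousAt (fun v : E => ‖v‖⁻¹ • v) b := by
    exact ((continuousAt_id.norm.inv₀ (norm_ne_zero_iff.2 hb)).smul continuousAt_id)
  have h2 := hcont.tendsto.comp h1
  apply h2.congr'
  filter_upwards [eventually_gt_atTop (0:ℝ)] with r hr
  have hr0 : r ≠ 0 := ne_of_gt hr
  have key : w + r • b = r • (r⁻¹ • w + b) := by
    rw [smul_add, smul_smul, mul_inv_cancel₀ hr0, one_smul]
  rw [Function.comp_apply, key, norm_smul, Real.norm_eq_abs, abs_of_pos hr, mul_inv,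
    smul_smul]
  rw [show r⁻¹ * ‖r⁻¹ • w + b‖⁻¹ * r = ‖r⁻¹ • w + b‖⁻¹ by
    rw [mul_comm, ← mul_assoc, mul_inv_cancel₀ hr0, one_mul]]

lemma tendsto_boundary {E : Type*} [NormedAddCommGroup E] [InnerProductSpace ℝ E]
    {g h : E → ℂ} (hgh : IsBoundary g h) (w b : E) (hb : b ≠ 0) :
    Tendsto (fun r : ℝ => g (w + r • b)) atTop (𝓝 (h (‖b‖⁻¹ • b))) := by
  have hdir : Tendsto (fun r : ℝ => h (‖w + r • b‖⁻¹ • (w + r • b))) atTop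
      (𝓝 (h (‖b‖⁻¹ • b))) :=
    (hgh.1.continuousAt.tendsto.comp (tendsto_unit_translate w b hb))
  have hnorm := norm_translate_tendsto w b hb
  have hdiff : Tendsto (fun r : ℝ => g (w + r • b) - h (‖w + r • b‖⁻¹ • (w + r • b)))
      atTop (𝓝 0) := by
    rw [NormedAddCommGroup.tendsto_nhds_zero]
    intro ε hε
    obtain ⟨r₀, -, hr₀⟩ := hgh.2 ε hε
    filter_upwards [hnorm.eventually_ge_atTop r₀] with r hr
    exact hr₀ _ hr
  have := hdiff.add hdir
  simpa using this

section Aux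
variable {d : ℕ} {S : Set (Submodule ℝ (X d))} {a : X d}

lemma translates_tendsto_pointwise {f g : BoundedContinuousFunction (X d) ℂ}
    (h : TranslatesTendTo a f g) (x : X d) :
    Tendsto (fun r : ℝ => f (x + r • a)) atTop (𝓝 (g x)) :=
  (h {x} isCompact_singleton).tendsto_at (Set.mem_singleton x)

lemma tau_eq_const (τ : ↥(ES S) →⋆ₐ[ℂ] ↥(ES S))
    (hτ : ∀ f : ↥(ES S), TranslatesTendTo a (↑f) (↑(τ f)))
    (f : ↥(ES S)) (c : ℂ)
    (hc : ∀ x : X d, Tendsto (fun r : ℝ =>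
      (f : BoundedContinuousFunction (X d) ℂ) (x + r • a)) atTop (𝓝 c)) :
    τ f = c • 1 := by
  apply Subtype.ext
  ext x
  have h1 := translates_tendsto_pointwise (hτ f) x
  have h2 := tendsto_nhds_unique h1 (hc x)
  have : ((c • (1 : ↥(ES S)) : ↥(ES S)) : BoundedContinuousFunction (X d) ℂ) x = c := by
    simp
  rw [h2, this]

lemma chi_of_const (τ : ↥(ES S) →⋆ₐ[ℂ] ↥(ES S))
    (hτ : ∀ f : ↥(ES S), TranslatesTendTo a (↑f) (↑(τ f)))
    (χ : WeakDual.characterSpace ℂ ↥(ES S))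
    (hker : ∀ f : ↥(ES S), τ f = 0 → χ f = 0)
    (f : ↥(ES S)) (c : ℂ)
    (hc : ∀ x : X d, Tendsto (fun r : ℝ =>
      (f : BoundedContinuousFunction (X d) ℂ) (x + r • a)) atTop (𝓝 c)) :
    χ f = c := by
  have htauf : τ f = c • 1 := tau_eq_const τ hτ f c hc
  have hz : τ (f - c • 1) = 0 := by
    rw [map_sub, _root_.map_smul, map_one, htauf, sub_self]
  have h0 := hker _ hz
  rw [map_sub, _root_.map_smul, map_one, smul_eq_mul, mul_one, sub_eq_zero] at h0
  exact h0

lemma proj_ne_zero {Y : Submodule ℝ (X d)} (haY : a ∉ Y) :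
    Submodule.orthogonalProjectionOnto Yᗮ a ≠ 0 := by
  intro h
  rw [Submodule.orthogonalProjectionOnto_eq_zero_iff, Submodule.orthogonal_orthogonal] at h
  exact haY h

/-- (a) → (b) -/
lemma a_implies_b (ha : a ≠ 0) (τ : ↥(ES S) →⋆ₐ[ℂ] ↥(ES S))
    (hτ : ∀ f : ↥(ES S), TranslatesTendTo a (↑f) (↑(τ f)))
    (χ : WeakDual.characterSpace ℂ ↥(ES S))
    (hker : ∀ f : ↥(ES S), τ f = 0 → χ f = 0) :
    ∀ (f : ↥(ES S)) (h : X d → ℂ),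
      IsBoundary (⇑(f : BoundedContinuousFunction (X d) ℂ)) h → χ f = h (‖a‖⁻¹ • a) := by
  intro f h hbd
  exact chi_of_const τ hτ χ hker f _ (fun x => tendsto_boundary hbd x a ha)

/-- (a) → (c) -/
lemma a_implies_c (ha : a ≠ 0) (τ : ↥(ES S) →⋆ₐ[ℂ] ↥(ES S))
    (hτ : ∀ f : ↥(ES S), TranslatesTendTo a (↑f) (↑(τ f)))
    (χ : WeakDual.characterSpace ℂ ↥(ES S))
    (hker : ∀ f : ↥(ES S), τ f = 0 → χ f = 0) :
    ∀ Y ∈ S, a ∉ Y → ∀ (g : BoundedContinuousFunction (↥Yᗮ) ℂ) (h : ↥Yᗮ → ℂ),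
      IsBoundary ⇑g h → ∀ f : ↥(ES S),
        (∀ x : X d, (f : BoundedContinuousFunction (X d) ℂ) x =
          g (Submodule.orthogonalProjectionOnto Yᗮ x)) →
        χ f = h (‖(Submodule.orthogonalProjectionOnto Yᗮ a : ↥Yᗮ)‖⁻¹ • Submodule.orthogonalProjectionOnto Yᗮ a) := by
  intro Y hY haY g h hbd f hf
  have hb := proj_ne_zero haY
  apply chi_of_const τ hτ χ hker f
  intro x
  have key := tendsto_boundary hbd (Submodule.orthogonalProjectionOnto Yᗮ x) (Submodule.orthogonalProjectionOnto Yᗮ a) hb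
  apply key.congr
  intro r
  have harg : Submodule.orthogonalProjectionOnto Yᗮ (x + r • a) =
      Submodule.orthogonalProjectionOnto Yᗮ x + r • Submodule.orthogonalProjectionOnto Yᗮ a := by
    rw [map_add, _root_.map_smul]
  rw [hf (x + r • a), harg]

/-- (c) → (b) -/
lemma c_implies_b (ha : a ≠ 0) (h0 : (⊥ : Submodule ℝ (X d)) ∈ S)
    (χ : WeakDual.characterSpace ℂ ↥(ES S))
    (hc : ∀ Y ∈ S, a ∉ Y → ∀ (g : BoundedContinuousFunction (↥Yᗮ) ℂ) (h : ↥Yᗮ → ℂ),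
      IsBoundary ⇑g h → ∀ f : ↥(ES S),
        (∀ x : X d, (f : BoundedContinuousFunction (X d) ℂ) x =
          g (Submodule.orthogonalProjectionOnto Yᗮ x)) →
        χ f = h (‖(Submodule.orthogonalProjectionOnto Yᗮ a : ↥Yᗮ)‖⁻¹ • Submodule.orthogonalProjectionOnto Yᗮ a)) :
    ∀ (f : ↥(ES S)) (h : X d → ℂ),
      IsBoundary (⇑(f : BoundedContinuousFunction (X d) ℂ)) h → χ f = h (‖a‖⁻¹ • a) := by
  intro f h hbd
  set Y : Submodule ℝ (X d) := ⊥ with hYdef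
  have hmem : ∀ x : X d, x ∈ Yᗮ := by
    intro x; rw [hYdef, Submodule.bot_orthogonal_eq_top]; trivial
  have hproj : ∀ x : X d, ((Submodule.orthogonalProjectionOnto Yᗮ x : ↥Yᗮ) : X d) = x := by
    intro x; exact Submodule.starProjection_eq_self_iff.2 (hmem x)
  set g : BoundedContinuousFunction (↥Yᗮ) ℂ :=
    (f : BoundedContinuousFunction (X d) ℂ).compContinuous
      ⟨Subtype.val, continuous_subtype_val⟩ with hgdef
  have hgbd : IsBoundary ⇑g (fun v : ↥Yᗮ => h ↑v) := by
    constructor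
    · exact hbd.1.comp continuous_subtype_val
    · intro ε hε
      obtain ⟨r, hr, hest⟩ := hbd.2 ε hε
      refine ⟨r, hr, fun v hv => ?_⟩
      have h2 : ((‖v‖⁻¹ • v : ↥Yᗮ) : X d) = ‖(v:X d)‖⁻¹ • (v : X d) := by
        simp [Submodule.coe_norm]
      show ‖(f : BoundedContinuousFunction (X d) ℂ) ↑v - h ↑(‖v‖⁻¹ • v : ↥Yᗮ)‖ < ε
      rw [h2]
      exact hest _ (by rwa [← Submodule.coe_norm])
  have := hc Y h0 (by simp only [hYdef, Submodule.mem_bot]; exact ha) g _ hgbd f (fun x => by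
    rw [hgdef]; simp only [BoundedContinuousFunction.compContinuous_apply,
      ContinuousMap.coe_mk, hproj x])
  rw [this]
  show h ↑((‖(Submodule.orthogonalProjectionOnto Yᗮ a : ↥Yᗮ)‖⁻¹ •
      Submodule.orthogonalProjectionOnto Yᗮ a : ↥Yᗮ)) = h (‖a‖⁻¹ • a)
  congr 1
  rw [Submodule.coe_smul, Submodule.coe_norm, hproj a]

set_option maxHeartbeats 1000000 in
/-- (b) → (c) -/
lemma b_implies_c (ha : a ≠ 0) (h0 : (⊥ : Submodule ℝ (X d)) ∈ S)
    (χ : WeakDual.characterSpace ℂ ↥(ES S))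
    (hb : ∀ (f : ↥(ES S)) (h : X d → ℂ),
      IsBoundary (⇑(f : BoundedContinuousFunction (X d) ℂ)) h → χ f = h (‖a‖⁻¹ • a)) :
    ∀ Y ∈ S, a ∉ Y → ∀ (g : BoundedContinuousFunction (↥Yᗮ) ℂ) (h : ↥Yᗮ → ℂ),
      IsBoundary ⇑g h → ∀ f : ↥(ES S),
        (∀ x : X d, (f : BoundedContinuousFunction (X d) ℂ) x =
          g (Submodule.orthogonalProjectionOnto Yᗮ x)) →
        χ f = h (‖(Submodule.orthogonalProjectionOnto Yᗮ a : ↥Yᗮ)‖⁻¹ • Submodule.orthogonalProjectionOnto Yᗮ a) := by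
  intro Y hY haY g h hgh f hf
  set b : ↥Yᗮ := Submodule.orthogonalProjectionOnto Yᗮ a with hbdef
  have hbne : b ≠ 0 := proj_ne_zero haY
  have hbpos : 0 < ‖b‖ := norm_pos_iff.2 hbne
  have hapos : 0 < ‖a‖ := norm_pos_iff.2 ha
  set δ : ℝ := ‖b‖ / ‖a‖ with hδdef
  have hδ : 0 < δ := div_pos hbpos hapos
  set ψ : ℝ → ℝ := fun t => min 1 (max 0 (3 * t / δ - 1)) with hψdef
  have hψcont : Continuous ψ := by
    apply continuous_const.min
    apply continuous_const.max
    exact ((continuous_const.mul continuous_id).div_const δ).sub continuous_const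
  have hψ0 : ∀ t : ℝ, t ≤ δ / 3 → ψ t = 0 := by
    intro t ht
    have h1 : 3 * t / δ - 1 ≤ 0 := by
      rw [sub_nonpos, div_le_one hδ]; linarith
    simp [hψdef, max_eq_left h1, min_eq_right]
  have hψδ : ψ δ = 1 := by
    have h1 : 3 * δ / δ - 1 = 2 := by field_simp; ring
    simp [hψdef, h1]
  have hψabs : ∀ t : ℝ, |ψ t| ≤ 1 := by
    intro t
    rw [abs_le]
    constructor
    · have : (0:ℝ) ≤ min 1 (max 0 (3 * t / δ - 1)) := le_min zero_le_one (le_max_left _ _)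
      linarith [this]
    · exact min_le_left _ _
  -- the projection as a function
  have hπcont : Continuous (fun x : X d => (Submodule.orthogonalProjectionOnto Yᗮ x : ↥Yᗮ)) :=
    (Submodule.orthogonalProjectionOnto Yᗮ).continuous
  -- the cutoff function φ
  set φf : X d → ℂ := fun x => ((ψ (‖(Submodule.orthogonalProjectionOnto Yᗮ x : ↥Yᗮ)‖ / max ‖x‖ 1) : ℝ) : ℂ)
    with hφfdef
  have hmaxpos : ∀ x : X d, (0:ℝ) < max ‖x‖ 1 := fun x => lt_max_of_lt_right one_pos
  have hφfcont : Continuous φf := by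
    apply Complex.continuous_ofReal.comp
    apply hψcont.comp
    exact (hπcont.norm).div (continuous_norm.max continuous_const)
      (fun x => ne_of_gt (hmaxpos x))
  have hφfbound : ∀ x : X d, ‖φf x‖ ≤ 1 := by
    intro x
    rw [hφfdef]
    simp only [Complex.norm_real]
    exact hψabs _
  set φ : BoundedContinuousFunction (X d) ℂ :=
    BoundedContinuousFunction.ofNormedAddCommGroup φf hφfcont 1 hφfbound with hφdef
  have hφapp : ∀ x : X d, φ x = φf x := fun x => rfl
  -- key computation : value of φf for ‖z‖ ≥ 1
  have hφval : ∀ z : X d, 1 ≤ ‖z‖ →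
      φf z = ((ψ (‖(Submodule.orthogonalProjectionOnto Yᗮ z : ↥Yᗮ)‖ / ‖z‖) : ℝ) : ℂ) := by
    intro z hz
    rw [hφfdef]
    simp only []
    rw [max_eq_left hz]
  -- direction computation
  have hdir : ∀ z : X d, 0 < ‖z‖ →
      ‖(Submodule.orthogonalProjectionOnto Yᗮ (‖z‖⁻¹ • z) : ↥Yᗮ)‖ =
        ‖(Submodule.orthogonalProjectionOnto Yᗮ z : ↥Yᗮ)‖ / ‖z‖ := by
    intro z hz
    rw [_root_.map_smul, norm_smul, Real.norm_eq_abs, abs_of_nonneg (inv_nonneg.2 hz.le),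
      inv_mul_eq_div]
  -- φ is in ES S
  have hφmem : φ ∈ ES S := by
    apply StarSubalgebra.le_topologicalClosure
    apply StarAlgebra.subset_adjoin
    refine ⟨⊥, h0, φ.compContinuous ⟨Subtype.val, continuous_subtype_val⟩, ?_, ?_⟩
    · refine ⟨fun v => ((ψ (‖(Submodule.orthogonalProjectionOnto Yᗮ (v:X d) : ↥Yᗮ)‖) : ℝ) : ℂ), ?_, ?_⟩
      · exact Complex.continuous_ofReal.comp (hψcont.comp
          ((hπcont.comp continuous_subtype_val).norm))
      · intro ε hε
        refine ⟨1, one_pos, fun v hv => ?_⟩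
        have hv' : 1 ≤ ‖(v : X d)‖ := by rwa [← Submodule.coe_norm]
        have hvpos : 0 < ‖(v : X d)‖ := lt_of_lt_of_le one_pos hv'
        have e1 : (φ.compContinuous ⟨Subtype.val, continuous_subtype_val⟩) v
            = φf (v : X d) := rfl
        have e2 : ((‖v‖⁻¹ • v : ↥(⊥ᗮ : Submodule ℝ (X d))) : X d)
            = ‖(v:X d)‖⁻¹ • (v : X d) := by
          simp [Submodule.coe_norm]
        rw [e1, hφval _ hv']
        show ‖_ - ((ψ (‖(Submodule.orthogonalProjectionOnto Yᗮ
          ((‖v‖⁻¹ • v : ↥(⊥ᗮ : Submodule ℝ (X d))) : X d) : ↥Yᗮ)‖) : ℝ) : ℂ)‖ < ε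
        rw [e2, hdir _ hvpos, sub_self, norm_zero]
        exact hε
    · intro x
      have hx : x ∈ (⊥ᗮ : Submodule ℝ (X d)) := by
        rw [Submodule.bot_orthogonal_eq_top]; trivial
      have : ((Submodule.orthogonalProjectionOnto (⊥ᗮ : Submodule ℝ (X d)) x : ↥(⊥ᗮ : Submodule ℝ (X d))) : X d) = x :=
        Submodule.starProjection_eq_self_iff.2 hx
      simp only [BoundedContinuousFunction.compContinuous_apply, ContinuousMap.coe_mk]
      rw [this]
  set Φ : ↥(ES S) := ⟨φ, hφmem⟩ with hΦdef
  -- χ Φ = 1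
  have hχΦ : χ Φ = 1 := by
    have hΦbd : IsBoundary (⇑(Φ : BoundedContinuousFunction (X d) ℂ))
        (fun x : X d => ((ψ (‖(Submodule.orthogonalProjectionOnto Yᗮ x : ↥Yᗮ)‖) : ℝ) : ℂ)) := by
      constructor
      · exact Complex.continuous_ofReal.comp (hψcont.comp (hπcont.norm))
      · intro ε hε
        refine ⟨1, one_pos, fun z hz => ?_⟩
        have hzpos : 0 < ‖z‖ := lt_of_lt_of_le one_pos hz
        show ‖φf z - _‖ < ε
        rw [hφval z hz]
        show ‖_ - ((ψ (‖(Submodule.orthogonalProjectionOnto Yᗮ (‖z‖⁻¹ • z) : ↥Yᗮ)‖) : ℝ) : ℂ)‖ < ε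
        rw [hdir z hzpos, sub_self, norm_zero]
        exact hε
    have := hb Φ _ hΦbd
    rw [this]
    show ((ψ (‖(Submodule.orthogonalProjectionOnto Yᗮ (‖a‖⁻¹ • a) : ↥Yᗮ)‖) : ℝ) : ℂ) = 1
    rw [hdir a hapos, ← hbdef, ← hδdef, hψδ, Complex.ofReal_one]
  -- the limit function H
  set q : ↥Yᗮ → ↥Yᗮ := fun v => (max ‖v‖ (δ/4))⁻¹ • v with hqdef
  have hq4 : (0:ℝ) < δ/4 := by linarith
  have hqcont : Continuous q := by
    exact Continuous.smul ((continuous_norm.max continuous_const).inv₀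
      (fun v => ne_of_gt (lt_max_of_lt_right hq4))) continuous_id
  have hqval : ∀ v : ↥Yᗮ, δ/4 < ‖v‖ → q v = ‖v‖⁻¹ • v := by
    intro v hv
    rw [hqdef]
    simp only []
    rw [max_eq_left hv.le]
  set H : X d → ℂ := fun x => h (q (Submodule.orthogonalProjectionOnto Yᗮ x)) *
    ((ψ (‖(Submodule.orthogonalProjectionOnto Yᗮ x : ↥Yᗮ)‖) : ℝ) : ℂ) with hHdef
  have hHcont : Continuous H := by
    apply Continuous.mul
    · exact hgh.1.comp (hqcont.comp hπcont)
    · exact Complex.continuous_ofReal.comp (hψcont.comp (hπcont.norm))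
  -- F = f * Φ has boundary H
  have hFapp : ∀ x : X d, ((f * Φ : ↥(ES S)) : BoundedContinuousFunction (X d) ℂ) x
      = g (Submodule.orthogonalProjectionOnto Yᗮ x) * φf x := by
    intro x
    show ((f : BoundedContinuousFunction (X d) ℂ) * φ) x = _
    rw [BoundedContinuousFunction.mul_apply, hf x]
    rfl
  have hFbd : IsBoundary (⇑((f * Φ : ↥(ES S)) : BoundedContinuousFunction (X d) ℂ)) H := by
    refine ⟨hHcont, ?_⟩
    intro ε hε
    obtain ⟨r₀, hr₀pos, hr₀⟩ := hgh.2 ε hε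
    refine ⟨max 1 (3 * r₀ / δ), lt_max_of_lt_left one_pos, fun z hz => ?_⟩
    have hz1 : 1 ≤ ‖z‖ := le_trans (le_max_left _ _) hz
    have hzr : 3 * r₀ / δ ≤ ‖z‖ := le_trans (le_max_right _ _) hz
    have hzpos : 0 < ‖z‖ := lt_of_lt_of_le one_pos hz1
    set t : ℝ := ‖(Submodule.orthogonalProjectionOnto Yᗮ z : ↥Yᗮ)‖ / ‖z‖ with htdef
    have htnonneg : 0 ≤ t := div_nonneg (norm_nonneg _) hzpos.le
    -- value of H at the unit vector
    have hHval : H (‖z‖⁻¹ • z) =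
        h (q (‖z‖⁻¹ • (Submodule.orthogonalProjectionOnto Yᗮ z : ↥Yᗮ))) * ((ψ t : ℝ) : ℂ) := by
      rw [hHdef]
      simp only []
      rw [_root_.map_smul]
      congr 2
      rw [norm_smul, Real.norm_eq_abs, abs_of_nonneg (inv_nonneg.2 hzpos.le), inv_mul_eq_div]
    rw [hFapp z, hφval z hz1, ← htdef, hHval]
    by_cases hcase : t ≤ δ/3
    · rw [hψ0 t hcase]
      simp only [Complex.ofReal_zero, mul_zero, sub_zero, norm_zero]
      exact hε
    · push_neg at hcase
      have hab : ‖(‖z‖⁻¹ • (Submodule.orthogonalProjectionOnto Yᗮ z : ↥Yᗮ))‖ = t := by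
        rw [norm_smul, Real.norm_eq_abs, abs_of_nonneg (inv_nonneg.2 hzpos.le), inv_mul_eq_div]
      have htpos : 0 < t := lt_trans (by linarith) hcase
      have hπznorm : ‖(Submodule.orthogonalProjectionOnto Yᗮ z : ↥Yᗮ)‖ = t * ‖z‖ := by
        rw [htdef, div_mul_cancel₀]
        exact ne_of_gt hzpos
      have hπzpos : 0 < ‖(Submodule.orthogonalProjectionOnto Yᗮ z : ↥Yᗮ)‖ := by
        rw [hπznorm]; positivity
      have hqeq : q (‖z‖⁻¹ • (Submodule.orthogonalProjectionOnto Yᗮ z : ↥Yᗮ)) =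
          ‖(Submodule.orthogonalProjectionOnto Yᗮ z : ↥Yᗮ)‖⁻¹ • (Submodule.orthogonalProjectionOnto Yᗮ z : ↥Yᗮ) := by
        rw [hqval _ (by rw [hab]; linarith), hab, smul_smul, hπznorm]
        congr 1
        rw [mul_inv]
      rw [hqeq]
      have hπzr₀ : r₀ ≤ ‖(Submodule.orthogonalProjectionOnto Yᗮ z : ↥Yᗮ)‖ := by
        rw [hπznorm]
        calc r₀ = (δ/3) * (3 * r₀ / δ) := by field_simp
        _ ≤ (δ/3) * ‖z‖ := by
            apply mul_le_mul_of_nonneg_left hzr (by linarith)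
        _ ≤ t * ‖z‖ := by
            apply mul_le_mul_of_nonneg_right (by linarith) hzpos.le
      have hest := hr₀ _ hπzr₀
      calc ‖g (Submodule.orthogonalProjectionOnto Yᗮ z) * ((ψ t : ℝ) : ℂ) -
            h (‖(Submodule.orthogonalProjectionOnto Yᗮ z : ↥Yᗮ)‖⁻¹ • (Submodule.orthogonalProjectionOnto Yᗮ z : ↥Yᗮ)) *
              ((ψ t : ℝ) : ℂ)‖
          = ‖(g (Submodule.orthogonalProjectionOnto Yᗮ z) -
              h (‖(Submodule.orthogonalProjectionOnto Yᗮ z : ↥Yᗮ)‖⁻¹ •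
                (Submodule.orthogonalProjectionOnto Yᗮ z : ↥Yᗮ))) * ((ψ t : ℝ) : ℂ)‖ := by
            rw [sub_mul]
        _ = ‖g (Submodule.orthogonalProjectionOnto Yᗮ z) -
              h (‖(Submodule.orthogonalProjectionOnto Yᗮ z : ↥Yᗮ)‖⁻¹ •
                (Submodule.orthogonalProjectionOnto Yᗮ z : ↥Yᗮ))‖ * ‖((ψ t : ℝ) : ℂ)‖ := norm_mul _ _
        _ ≤ ‖g (Submodule.orthogonalProjectionOnto Yᗮ z) -
              h (‖(Submodule.orthogonalProjectionOnto Yᗮ z : ↥Yᗮ)‖⁻¹ •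
                (Submodule.orthogonalProjectionOnto Yᗮ z : ↥Yᗮ))‖ * 1 := by
            apply mul_le_mul_of_nonneg_left _ (norm_nonneg _)
            rw [Complex.norm_real]
            exact hψabs t
        _ < ε := by rw [mul_one]; exact hest
  -- conclude
  have hχF := hb (f * Φ) H hFbd
  rw [map_mul, hχΦ, mul_one] at hχF
  rw [hχF, hHdef]
  show h (q (Submodule.orthogonalProjectionOnto Yᗮ (‖a‖⁻¹ • a))) *
      ((ψ (‖(Submodule.orthogonalProjectionOnto Yᗮ (‖a‖⁻¹ • a) : ↥Yᗮ)‖) : ℝ) : ℂ) = _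
  rw [hdir a hapos, ← hbdef, ← hδdef, hψδ, Complex.ofReal_one, mul_one]
  congr 1
  rw [_root_.map_smul, ← hbdef]
  have hnb : ‖(‖a‖⁻¹ • b : ↥Yᗮ)‖ = ‖a‖⁻¹ * ‖b‖ := by
    rw [norm_smul, Real.norm_eq_abs, abs_of_nonneg (inv_nonneg.2 hapos.le)]
  have hδeq : ‖a‖⁻¹ * ‖b‖ = δ := by rw [inv_mul_eq_div, hδdef]
  rw [hqval _ (by rw [hnb, hδeq]; linarith), hnb, smul_smul]
  congr 1
  rw [mul_inv, inv_inv, mul_comm ‖a‖ ‖b‖⁻¹, mul_assoc,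
    mul_inv_cancel₀ (ne_of_gt hapos), mul_one]

lemma projGen_star {p : BoundedContinuousFunction (X d) ℂ} (hp : p ∈ projGen S) :
    star p ∈ projGen S := by
  obtain ⟨Y, hY, g, ⟨h, hgh⟩, hx⟩ := hp
  refine ⟨Y, hY, star g, ⟨fun v => star (h v), ?_, ?_⟩, ?_⟩
  · exact continuous_star.comp hgh.1
  · intro ε hε
    obtain ⟨r, hr, hest⟩ := hgh.2 ε hε
    refine ⟨r, hr, fun z hz => ?_⟩
    rw [BoundedContinuousFunction.star_apply]
    calc ‖star (g z) - star (h (‖z‖⁻¹ • z))‖ = ‖star (g z - h (‖z‖⁻¹ • z))‖ := by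
          rw [star_sub]
    _ = ‖g z - h (‖z‖⁻¹ • z)‖ := norm_star _
    _ < ε := hest z hz
  · intro x
    rw [BoundedContinuousFunction.star_apply, BoundedContinuousFunction.star_apply, hx x]

lemma projGen_subset_ES : projGen S ⊆ (ES S : Set (BoundedContinuousFunction (X d) ℂ)) :=
  fun p hp => StarSubalgebra.le_topologicalClosure _ (StarAlgebra.subset_adjoin ℂ _ hp)

lemma mem_closure_adjoin_pullback (f : ↥(ES S)) :
    f ∈ closure ((StarAlgebra.adjoin ℂ
      {x : ↥(ES S) | (x : BoundedContinuousFunction (X d) ℂ) ∈ projGen S} :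
        StarSubalgebra ℂ ↥(ES S)) : Set ↥(ES S)) := by
  rw [closure_subtype]
  have hf : (f : BoundedContinuousFunction (X d) ℂ) ∈
      closure ((StarAlgebra.adjoin ℂ (projGen S) :
        StarSubalgebra ℂ (BoundedContinuousFunction (X d) ℂ)) : Set _) := by
    have h2 : (f : BoundedContinuousFunction (X d) ℂ) ∈
        (((StarAlgebra.adjoin ℂ (projGen S)).topologicalClosure :
          StarSubalgebra ℂ (BoundedContinuousFunction (X d) ℂ)) : Set _) := f.2
    rwa [StarSubalgebra.topologicalClosure_coe] at h2
  refine closure_mono ?_ hf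
  intro u hu
  have hmap : StarSubalgebra.map (ES S).subtype (StarAlgebra.adjoin ℂ
      {x : ↥(ES S) | (x : BoundedContinuousFunction (X d) ℂ) ∈ projGen S}) =
      StarAlgebra.adjoin ℂ ((ES S).subtype ''
        {x : ↥(ES S) | (x : BoundedContinuousFunction (X d) ℂ) ∈ projGen S}) :=
    StarAlgHom.map_adjoin _ _
  have himg : (ES S).subtype ''
      {x : ↥(ES S) | (x : BoundedContinuousFunction (X d) ℂ) ∈ projGen S} = projGen S := by
    ext p
    constructor
    · rintro ⟨x, hx, rfl⟩; exact hx
    · intro hp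
      exact ⟨⟨p, projGen_subset_ES hp⟩, hp, rfl⟩
  rw [himg] at hmap
  have hu' : u ∈ StarSubalgebra.map (ES S).subtype (StarAlgebra.adjoin ℂ
      {x : ↥(ES S) | (x : BoundedContinuousFunction (X d) ℂ) ∈ projGen S}) := by
    rw [hmap]; exact hu
  obtain ⟨w, hw, hwu⟩ := hu'
  exact ⟨w, hw, hwu⟩

lemma tau_lipschitz (τ : ↥(ES S) →⋆ₐ[ℂ] ↥(ES S))
    (hτ : ∀ f : ↥(ES S), TranslatesTendTo a (↑f) (↑(τ f))) :
    LipschitzWith 1 (fun f : ↥(ES S) => τ f) := by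
  apply LipschitzWith.of_dist_le_mul
  intro f g
  rw [NNReal.coe_one, one_mul, Subtype.dist_eq, Subtype.dist_eq]
  rw [BoundedContinuousFunction.dist_le dist_nonneg]
  intro x
  have h1 := translates_tendsto_pointwise (hτ f) x
  have h2 := translates_tendsto_pointwise (hτ g) x
  apply le_of_tendsto (h1.dist h2)
  filter_upwards with r
  exact BoundedContinuousFunction.dist_coe_le_dist _

set_option maxHeartbeats 1000000 in
/-- (c) → (a) -/
lemma c_implies_a (ha : a ≠ 0) (τ : ↥(ES S) →⋆ₐ[ℂ] ↥(ES S))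
    (hτ : ∀ f : ↥(ES S), TranslatesTendTo a (↑f) (↑(τ f)))
    (χ : WeakDual.characterSpace ℂ ↥(ES S))
    (hc : ∀ Y ∈ S, a ∉ Y → ∀ (g : BoundedContinuousFunction (↥Yᗮ) ℂ) (h : ↥Yᗮ → ℂ),
      IsBoundary ⇑g h → ∀ f : ↥(ES S),
        (∀ x : X d, (f : BoundedContinuousFunction (X d) ℂ) x =
          g (Submodule.orthogonalProjectionOnto Yᗮ x)) →
        χ f = h (‖(Submodule.orthogonalProjectionOnto Yᗮ a : ↥Yᗮ)‖⁻¹ • Submodule.orthogonalProjectionOnto Yᗮ a)) :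
    ∀ f : ↥(ES S), τ f = 0 → χ f = 0 := by
  -- step 1 : χ (τ f) = χ f on generators
  have hgen1 : ∀ f : ↥(ES S), (f : BoundedContinuousFunction (X d) ℂ) ∈ projGen S →
      χ (τ f) = χ f := by
    intro f hf
    obtain ⟨Y, hY, g, ⟨h, hgh⟩, hfx⟩ := hf
    by_cases haY : a ∈ Y
    · -- translates are constant, so τ f = f
      have hπa : (Submodule.orthogonalProjectionOnto Yᗮ a : ↥Yᗮ) = 0 :=
        Submodule.orthogonalProjectionOnto_eq_zero_iff.2 (Submodule.le_orthogonal_orthogonal Y haY)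
      have htf : τ f = f := by
        apply Subtype.ext
        ext x
        have h1 := translates_tendsto_pointwise (hτ f) x
        have h2 : Tendsto (fun _ : ℝ => (f : BoundedContinuousFunction (X d) ℂ) x)
            atTop (𝓝 ((f : BoundedContinuousFunction (X d) ℂ) x)) := tendsto_const_nhds
        refine tendsto_nhds_unique h1 (h2.congr (fun r => ?_))
        rw [hfx x, hfx (x + r • a), map_add, _root_.map_smul, hπa, smul_zero, add_zero]
      rw [htf]
    · -- τ f is the constant h(unit (π a))
      have hb := proj_ne_zero haY
      have hconst : ∀ x : X d, Tendsto (fun r : ℝ =>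
          (f : BoundedContinuousFunction (X d) ℂ) (x + r • a)) atTop
          (𝓝 (h (‖(Submodule.orthogonalProjectionOnto Yᗮ a : ↥Yᗮ)‖⁻¹ • Submodule.orthogonalProjectionOnto Yᗮ a))) := by
        intro x
        have key := tendsto_boundary hgh (Submodule.orthogonalProjectionOnto Yᗮ x)
          (Submodule.orthogonalProjectionOnto Yᗮ a) hb
        apply key.congr
        intro r
        have harg : Submodule.orthogonalProjectionOnto Yᗮ (x + r • a) =
            Submodule.orthogonalProjectionOnto Yᗮ x + r • Submodule.orthogonalProjectionOnto Yᗮ a := by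
          rw [map_add, _root_.map_smul]
        rw [hfx (x + r • a), harg]
      have htf := tau_eq_const τ hτ f _ hconst
      rw [htf, _root_.map_smul, map_one, smul_eq_mul, mul_one]
      exact (hc Y hY haY g h hgh f hfx).symm
  -- step 2 : χ (τ f) = χ f for all f, by density
  have key : ∀ f : ↥(ES S), χ (τ f) = χ f := by
    intro f
    set A : Set ↥(ES S) := {f : ↥(ES S) | χ (τ f) = χ f ∧ χ (τ (star f)) = χ (star f)}
      with hAdef
    have hτcont : Continuous (fun f : ↥(ES S) => τ f) := (tau_lipschitz τ hτ).continuous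
    have hχcont : Continuous (fun f : ↥(ES S) => χ f) := map_continuous χ
    have hAclosed : IsClosed A := by
      rw [hAdef, Set.setOf_and]
      apply IsClosed.inter
      · exact isClosed_eq (hχcont.comp hτcont) hχcont
      · exact isClosed_eq ((hχcont.comp hτcont).comp continuous_star)
          (hχcont.comp continuous_star)
    have hadj : ((StarAlgebra.adjoin ℂ
        {x : ↥(ES S) | (x : BoundedContinuousFunction (X d) ℂ) ∈ projGen S} :
          StarSubalgebra ℂ ↥(ES S)) : Set ↥(ES S)) ⊆ A := by
      intro x hx
      induction hx using StarAlgebra.adjoin_induction with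
      | mem y hy =>
        refine ⟨hgen1 y hy, hgen1 (star y) ?_⟩
        exact projGen_star hy
      | algebraMap r =>
        constructor
        · rw [AlgHomClass.commutes]
        · rw [← algebraMap_star_comm, AlgHomClass.commutes]
      | add y z hy hz hpy hpz =>
        refine ⟨?_, ?_⟩
        · rw [map_add, map_add, hpy.1, hpz.1, ← map_add]
        · rw [star_add, map_add, map_add, hpy.2, hpz.2, ← map_add]
      | mul y z hy hz hpy hpz =>
        refine ⟨?_, ?_⟩
        · rw [map_mul, map_mul, hpy.1, hpz.1, ← map_mul]
        · rw [star_mul, map_mul, map_mul, hpz.2, hpy.2, ← map_mul]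
      | star y hy hpy =>
        exact ⟨hpy.2, by rw [star_star]; exact hpy.1⟩
    have := hAclosed.closure_subset_iff.2 hadj (mem_closure_adjoin_pullback f)
    exact this.1
  intro f hf0
  rw [← key f, hf0, map_zero]

end Aux

/-- Let `S` be a family of subspaces of `X` with `{0} ∈ S`, `a ≠ 0`, `τ = τ_a` the
homomorphism sending `f ∈ E_S(X)` to the limit of its translates `f(· + ra)` (uniformly on
compact sets, as `r → +∞`), and let `χ` be a character of `E_S(X)`. The following are
equivalent:
(a) `χ` vanishes on `ker τ_a`;
(b) `χ(f) = h_f(a/‖a‖)` for every `f ∈ C(X̄)` (with boundary function `h_f`);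
(c) for every `Y ∈ S` with `a ∉ Y` and every `g ∈ C(overline{Y^⊥})` with boundary function
`h_g`, one has `χ(g ∘ π_Y) = h_g(π_Y(a)/‖π_Y(a)‖)`. -/
theorem character_vanishing_on_ker_tau_tfae (d : ℕ) (hd : 1 ≤ d)
    (S : Set (Submodule ℝ (X d))) (h0 : (⊥ : Submodule ℝ (X d)) ∈ S)
    (a : X d) (ha : a ≠ 0)
    (τ : ↥(ES S) →⋆ₐ[ℂ] ↥(ES S))
    (hτ : ∀ f : ↥(ES S), TranslatesTendTo a (↑f) (↑(τ f)))
    (χ : WeakDual.characterSpace ℂ ↥(ES S)) :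
    ((∀ f : ↥(ES S), τ f = 0 → χ f = 0) ↔
      (∀ (f : ↥(ES S)) (h : X d → ℂ),
        IsBoundary (⇑(f : BoundedContinuousFunction (X d) ℂ)) h → χ f = h (‖a‖⁻¹ • a))) ∧
    ((∀ (f : ↥(ES S)) (h : X d → ℂ),
        IsBoundary (⇑(f : BoundedContinuousFunction (X d) ℂ)) h → χ f = h (‖a‖⁻¹ • a)) ↔
      (∀ Y ∈ S, a ∉ Y → ∀ (g : BoundedContinuousFunction (↥Yᗮ) ℂ) (h : ↥Yᗮ → ℂ),
        IsBoundary ⇑g h → ∀ f : ↥(ES S),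
          (∀ x : X d, (f : BoundedContinuousFunction (X d) ℂ) x =
            g (Submodule.orthogonalProjectionOnto Yᗮ x)) →
          χ f = h (‖(Submodule.orthogonalProjectionOnto Yᗮ a : ↥Yᗮ)‖⁻¹ • Submodule.orthogonalProjectionOnto Yᗮ a))) := by
  constructor
  · constructor
    · exact fun hker => a_implies_b ha τ hτ χ hker
    · intro hb
      exact c_implies_a ha τ hτ χ (b_implies_c ha h0 χ hb)
  · constructor
    · exact fun hb => b_implies_c ha h0 χ hb
    · exact fun hc => c_implies_b ha h0 χ hc
end
end
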